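/- Let T = ⟨Γ, L, R⟩ be a rule system on presheaves over a small category C, with Γ small, and let p be a presheaf such that every object of the instance category L/p admits a morphism into some maximal object of L/p (this holds in particular when L/p is finite). Then the wide subcategory W of L/p — having all objects of L/p, and whose morphisms are the identities together with exactly those morphisms of L/p whose target is a maximal object — is final in L/p, i.e. the inclusion functor W ⥤ L/p is a final functor. -/

import Mathlib

open CategoryTheory CategoryTheory.Limits

universe u

variable (C : Type u) [SmallCategory C]

/-- The category of presheaves over `C`. -/
abbrev GM := Cᵒᵖ ⥤ Type u

/-- A rule system `⟨Γ, L, R⟩` on presheaves over `C`: a small category `Γ` of rules,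
a full and faithful left-hand-side functor `L` sending every morphism to a monomorphism,
and a right-hand-side functor `R` sending every morphism to a monomorphism. -/
structure RuleSystem where
  Γ : Type u
  [catΓ : SmallCategory Γ]
  L : Γ ⥤ GM C
  R : Γ ⥤ GM C
  [fullL : L.Full]
  [faithfulL : L.Faithful]
  monoL : ∀ {a b : Γ} (e : a ⟶ b), Mono (L.map e)
  monoR : ∀ {a b : Γ} (e : a ⟶ b), Mono (R.map e)

attribute [instance] RuleSystem.catΓ RuleSystem.fullL RuleSystem.faithfulL

variable {C}

/-- The instance category `L/p`: objects are pairs `⟨γ, m⟩` with `m : L(γ) ⟶ p` a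
monomorphism; morphisms `⟨γ, m⟩ ⟶ ⟨γ', m'⟩` are the morphisms `e : γ ⟶ γ'` of `Γ` with
`m' ∘ L(e) = m`. -/
def Inst (T : RuleSystem C) (p : GM C) :=
  ObjectProperty.FullSubcategory (fun f : CostructuredArrow T.L p => Mono f.hom)

instance (T : RuleSystem C) (p : GM C) : Category (Inst T p) :=
  ObjectProperty.FullSubcategory.category _

/-- The diagram `D_T(p) : L/p ⥤ GM` sending `⟨γ, m⟩` to `R(γ)` and `e` to `R(e)`. -/
def DT (T : RuleSystem C) (p : GM C) : Inst T p ⥤ GM C :=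
  ObjectProperty.ι _ ⋙ CostructuredArrow.proj T.L p ⋙ T.R

/-- An object of the instance category is maximal if every morphism out of it admits a
morphism back. -/
def MaximalInst {T : RuleSystem C} {p : GM C} (n : Inst T p) : Prop :=
  ∀ m : Inst T p, (n ⟶ m) → Nonempty (m ⟶ n)


/-- The wide subcategory `W` of the instance category `L/p`: it has all objects of `L/p`
(wrapped), and its morphisms are the identities together with exactly the morphisms of
`L/p` whose target is a maximal object. -/
structure WideCat (T : RuleSystem C) (p : GM C) where
  obj : Inst T p

instance (T : RuleSystem C) (p : GM C) : Category (WideCat T p) where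
  Hom n n' := {e : n.obj ⟶ n'.obj // MaximalInst n'.obj ∨ n = n'}
  id n := ⟨𝟙 n.obj, Or.inr rfl⟩
  comp {n n' n''} e f := ⟨e.1 ≫ f.1, by
    rcases f.2 with h | h
    · exact Or.inl h
    · rcases e.2 with h' | h'
      · exact Or.inl (h ▸ h')
      · exact Or.inr (h'.trans h)⟩
  id_comp f := Subtype.ext (Category.id_comp _)
  comp_id f := Subtype.ext (Category.comp_id _)
  assoc f g h := Subtype.ext (Category.assoc _ _ _)

/-- The inclusion functor `W ⥤ L/p`. -/
def wideIncl (T : RuleSystem C) (p : GM C) : WideCat T p ⥤ Inst T p where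
  obj n := n.obj
  map e := e.1

/-- if every object of the instance category `L/p` admits a morphism into some
maximal object, then the wide subcategory `W` (all objects; morphisms the identities
together with the morphisms whose target is maximal) is final in `L/p`, i.e. the inclusion
functor `W ⥤ L/p` is a final functor. -/
theorem stmt4 (T : RuleSystem C) (p : GM C)
    (hmax : ∀ n : Inst T p, ∃ m : Inst T p, MaximalInst m ∧ Nonempty (n ⟶ m)) :
    (wideIncl T p).Final := by
  constructor
  intro n
  -- base object: ⟨n⟩ with identity
  let b : StructuredArrow n (wideIncl T p) :=
    StructuredArrow.mk (show n ⟶ (wideIncl T p).obj ⟨n⟩ from 𝟙 n)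
  have key : ∀ j : StructuredArrow n (wideIncl T p), Zigzag j b := by
    intro j
    obtain ⟨m, hm, ⟨g⟩⟩ := hmax j.right.obj
    let t : StructuredArrow n (wideIncl T p) :=
      StructuredArrow.mk (show n ⟶ (wideIncl T p).obj ⟨m⟩ from j.hom ≫ g)
    have e1 : j ⟶ t := StructuredArrow.homMk ⟨g, Or.inl hm⟩ rfl
    have e2 : b ⟶ t := StructuredArrow.homMk ⟨j.hom ≫ g, Or.inl hm⟩ (Category.id_comp _)
    exact Relation.ReflTransGen.trans
      (Relation.ReflTransGen.single (Or.inl ⟨e1⟩))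
      (Relation.ReflTransGen.single (Or.inr ⟨e2⟩))
  have : Nonempty (StructuredArrow n (wideIncl T p)) := ⟨b⟩
  exact zigzag_isConnected fun j₁ j₂ =>
    (key j₁).trans (zigzag_symmetric.symm _ _ (key j₂))
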